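/- Let π and ρ be densities on ℝ^d, n < d, and define g(x_{≤n}) = ∫ (π/ρ)^{1/2}(x_{≤n},x_{>n}) ρ_{>n|≤n}(x_{>n}|x_{≤n}) dx_{>n}, with π̃*(x) ∝ g(x_{≤n})² ρ(x). Then for any nonnegative function g̃ on ℝⁿ such that π̃ ∝ g̃(x_{≤n})² ρ(x) is a density, the Pythagorean-type identity D_H(π, π̃)² = D_H(π, π̃*)² + ‖g√ρ‖₂ · D_H(π̃*, π̃)² holds. In particular D_H(π, π̃*) ≤ D_H(π, π̃), i.e., π̃* is the optimal approximation among densities of this form. -/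

import Mathlib

open MeasureTheory

private lemma sqrt_amgm {a b : ℝ} (ha : 0 ≤ a) (hb : 0 ≤ b) :
    Real.sqrt a * Real.sqrt b ≤ (a + b) / 2 := by
  nlinarith [sq_nonneg (Real.sqrt a - Real.sqrt b), Real.sq_sqrt ha, Real.sq_sqrt hb]

private lemma integrable_of_integral_ne_zero {α : Type*} [MeasurableSpace α] {μ : Measure α}
    {f : α → ℝ} (h : ∫ x, f x ∂μ ≠ 0) : Integrable f μ := by
  by_contra hf
  exact h (integral_undef hf)

private lemma sqrt_div_mul_div {a b : ℝ} (c : ℝ) (ha : 0 ≤ a) (hb : 0 ≤ b) :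
    Real.sqrt (a / b) * (b / c) = Real.sqrt a * Real.sqrt b / c := by
  rcases eq_or_lt_of_le hb with hb0 | hb0
  · simp [← hb0]
  · rw [Real.sqrt_div ha b]
    rcases eq_or_ne c 0 with rfl | hc
    · simp
    · have hsb : Real.sqrt b ≠ 0 := by positivity
      have hbb := Real.mul_self_sqrt hb
      rw [← hbb]
      field_simp
      have h2 : Real.sqrt (Real.sqrt b ^ 2) ^ 2 = Real.sqrt b ^ 2 := Real.sq_sqrt (sq_nonneg _)
      linear_combination (-(Real.sqrt a)) * h2

private lemma expand_sq1 {a b s : ℝ} (hs : s ≠ 0) :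
    (a - b / s) ^ 2 = a ^ 2 + b ^ 2 / s ^ 2 - 2 / s * (a * b) := by
  field_simp; ring

private lemma expand_sq2 {b b' s s' : ℝ} (hs : s ≠ 0) (hs' : s' ≠ 0) :
    (b / s - b' / s') ^ 2 = b ^ 2 / s ^ 2 + b' ^ 2 / s' ^ 2 - 2 / (s * s') * (b * b') := by
  field_simp; ring

theorem stmt_8 {n m : ℕ} (π ρ : (Fin n → ℝ) × (Fin m → ℝ) → ℝ)
    (hπpos : ∀ p, 0 ≤ π p) (hρpos : ∀ p, 0 ≤ ρ p)
    (hπint : ∫ p, π p = 1) (hρint : ∫ p, ρ p = 1)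
    (g : (Fin n → ℝ) → ℝ)
    (hgdef : ∀ u, g u = ∫ v, Real.sqrt (π (u, v) / ρ (u, v)) * (ρ (u, v) / ∫ v', ρ (u, v')))
    (zs : ℝ) (hzs : zs = ∫ p, g p.1 ^ 2 * ρ p) (hzs0 : 0 < zs)
    (gt : (Fin n → ℝ) → ℝ) (hgt : ∀ u, 0 ≤ gt u)
    (zt : ℝ) (hzt : zt = ∫ p, gt p.1 ^ 2 * ρ p) (hzt0 : 0 < zt)
    (hgtInt : Integrable (fun p => gt p.1 ^ 2 * ρ p)) :
    ((1/2) * ∫ p, (Real.sqrt (π p) - Real.sqrt (gt p.1 ^ 2 * ρ p / zt))^2 =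
      (1/2) * (∫ p, (Real.sqrt (π p) - Real.sqrt (g p.1 ^ 2 * ρ p / zs))^2) +
        Real.sqrt zs *
          ((1/2) * ∫ p, (Real.sqrt (g p.1 ^ 2 * ρ p / zs) -
            Real.sqrt (gt p.1 ^ 2 * ρ p / zt))^2)) ∧
    Real.sqrt ((1/2) * ∫ p, (Real.sqrt (π p) - Real.sqrt (g p.1 ^ 2 * ρ p / zs))^2) ≤
      Real.sqrt ((1/2) * ∫ p, (Real.sqrt (π p) - Real.sqrt (gt p.1 ^ 2 * ρ p / zt))^2) := by
  have hvol : (volume : Measure ((Fin n → ℝ) × (Fin m → ℝ)))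
      = (volume : Measure (Fin n → ℝ)).prod (volume : Measure (Fin m → ℝ)) :=
    rfl
  -- basic integrability
  have hπInt : Integrable π := integrable_of_integral_ne_zero (by rw [hπint]; norm_num)
  have hρInt : Integrable ρ := integrable_of_integral_ne_zero (by rw [hρint]; norm_num)
  have hGInt : Integrable (fun p => g p.1 ^ 2 * ρ p) :=
    integrable_of_integral_ne_zero (by rw [← hzs]; exact hzs0.ne')
  -- g is nonnegative
  have hg : ∀ u, 0 ≤ g u := fun u => by
    rw [hgdef]
    exact integral_nonneg fun v => mul_nonneg (Real.sqrt_nonneg _)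
      (div_nonneg (hρpos _) (integral_nonneg fun v' => hρpos _))
  -- g u = h u / Z u
  have hgu : ∀ u, g u = (∫ v, Real.sqrt (π (u, v)) * Real.sqrt (ρ (u, v))) /
      (∫ v, ρ (u, v)) := by
    intro u
    calc g u = ∫ v, Real.sqrt (π (u, v) / ρ (u, v)) * (ρ (u, v) / ∫ v', ρ (u, v')) := hgdef u
      _ = ∫ v, (Real.sqrt (π (u, v)) * Real.sqrt (ρ (u, v))) / (∫ v', ρ (u, v')) := by
          congr 1; funext v; exact sqrt_div_mul_div _ (hπpos _) (hρpos _)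
      _ = (∫ v, Real.sqrt (π (u, v)) * Real.sqrt (ρ (u, v))) / (∫ v, ρ (u, v)) :=
          integral_div _ _
  -- sqrt rewrites
  have hSmul : ∀ (u : Fin n → ℝ) (v : Fin m → ℝ),
      Real.sqrt (g u ^ 2 * ρ (u, v)) = g u * Real.sqrt (ρ (u, v)) := fun u v => by
    rw [Real.sqrt_mul (sq_nonneg _), Real.sqrt_sq (hg _)]
  have hTmul : ∀ (u : Fin n → ℝ) (v : Fin m → ℝ),
      Real.sqrt (gt u ^ 2 * ρ (u, v)) = gt u * Real.sqrt (ρ (u, v)) := fun u v => by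
    rw [Real.sqrt_mul (sq_nonneg _), Real.sqrt_sq (hgt _)]
  -- measurability
  have hFm : AEStronglyMeasurable (fun p => Real.sqrt (π p)) volume :=
    Real.continuous_sqrt.comp_aestronglyMeasurable hπInt.aestronglyMeasurable
  have hSm : AEStronglyMeasurable (fun p => Real.sqrt (g p.1 ^ 2 * ρ p)) volume :=
    Real.continuous_sqrt.comp_aestronglyMeasurable hGInt.aestronglyMeasurable
  have hTm : AEStronglyMeasurable (fun p => Real.sqrt (gt p.1 ^ 2 * ρ p)) volume :=
    Real.continuous_sqrt.comp_aestronglyMeasurable hgtInt.aestronglyMeasurable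
  -- integrability of products
  have hFS : Integrable (fun p => Real.sqrt (π p) * Real.sqrt (g p.1 ^ 2 * ρ p)) := by
    refine Integrable.mono' ((hπInt.add hGInt).div_const 2) (hFm.mul hSm)
      (Filter.Eventually.of_forall fun p => ?_)
    rw [Real.norm_eq_abs, abs_of_nonneg (by positivity)]
    exact sqrt_amgm (hπpos p) (mul_nonneg (sq_nonneg _) (hρpos p))
  have hFT : Integrable (fun p => Real.sqrt (π p) * Real.sqrt (gt p.1 ^ 2 * ρ p)) := by
    refine Integrable.mono' ((hπInt.add hgtInt).div_const 2) (hFm.mul hTm)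
      (Filter.Eventually.of_forall fun p => ?_)
    rw [Real.norm_eq_abs, abs_of_nonneg (by positivity)]
    exact sqrt_amgm (hπpos p) (mul_nonneg (sq_nonneg _) (hρpos p))
  have hST : Integrable (fun p => Real.sqrt (g p.1 ^ 2 * ρ p) * Real.sqrt (gt p.1 ^ 2 * ρ p)) := by
    refine Integrable.mono' ((hGInt.add hgtInt).div_const 2) (hSm.mul hTm)
      (Filter.Eventually.of_forall fun p => ?_)
    rw [Real.norm_eq_abs, abs_of_nonneg (by positivity)]
    exact sqrt_amgm (mul_nonneg (sq_nonneg _) (hρpos p)) (mul_nonneg (sq_nonneg _) (hρpos p))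
  -- key fact 1 : ∫ √π √(g²ρ) = zs
  have key1 : ∫ p, Real.sqrt (π p) * Real.sqrt (g p.1 ^ 2 * ρ p) = zs := by
    rw [hzs, hvol, integral_prod _ (hvol ▸ hFS), integral_prod _ (hvol ▸ hGInt)]
    congr 1; funext u
    show (∫ v, Real.sqrt (π (u, v)) * Real.sqrt (g u ^ 2 * ρ (u, v)))
        = ∫ v, g u ^ 2 * ρ (u, v)
    have hL : ∫ v, Real.sqrt (π (u, v)) * Real.sqrt (g u ^ 2 * ρ (u, v))
        = g u * ∫ v, Real.sqrt (π (u, v)) * Real.sqrt (ρ (u, v)) := by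
      rw [← integral_const_mul]
      congr 1; funext v
      rw [hSmul u v]; ring
    have hR : ∫ v, g u ^ 2 * ρ (u, v) = g u ^ 2 * ∫ v, ρ (u, v) :=
      integral_const_mul _ _
    rw [hL, hR]
    by_cases hZ0 : (∫ v, ρ (u, v)) = 0
    · have hg0 : g u = 0 := by rw [hgu u, hZ0, div_zero]
      simp [hg0]
    · have hh : (∫ v, Real.sqrt (π (u, v)) * Real.sqrt (ρ (u, v)))
          = g u * ∫ v, ρ (u, v) := by
        rw [hgu u, div_mul_cancel₀ _ hZ0]
      rw [hh]; ring
  -- key fact 2 : ∫ √π √(gt²ρ) = ∫ √(g²ρ) √(gt²ρ)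
  have key2 : ∫ p, Real.sqrt (π p) * Real.sqrt (gt p.1 ^ 2 * ρ p)
      = ∫ p, Real.sqrt (g p.1 ^ 2 * ρ p) * Real.sqrt (gt p.1 ^ 2 * ρ p) := by
    rw [hvol, integral_prod _ (hvol ▸ hFT), integral_prod _ (hvol ▸ hST)]
    refine integral_congr_ae ?_
    filter_upwards [(hvol ▸ hρInt).prod_right_ae] with u hu
    show (∫ v, Real.sqrt (π (u, v)) * Real.sqrt (gt u ^ 2 * ρ (u, v)))
        = ∫ v, Real.sqrt (g u ^ 2 * ρ (u, v)) * Real.sqrt (gt u ^ 2 * ρ (u, v))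
    have hL : ∫ v, Real.sqrt (π (u, v)) * Real.sqrt (gt u ^ 2 * ρ (u, v))
        = gt u * ∫ v, Real.sqrt (π (u, v)) * Real.sqrt (ρ (u, v)) := by
      rw [← integral_const_mul]
      congr 1; funext v
      rw [hTmul u v]; ring
    have hR : ∫ v, Real.sqrt (g u ^ 2 * ρ (u, v)) * Real.sqrt (gt u ^ 2 * ρ (u, v))
        = (g u * gt u) * ∫ v, ρ (u, v) := by
      rw [← integral_const_mul]
      congr 1; funext v
      rw [hSmul u v, hTmul u v]
      have hmm := Real.mul_self_sqrt (hρpos (u, v))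
      linear_combination (g u * gt u) * hmm
    rw [hL, hR]
    have hhZ : (∫ v, Real.sqrt (π (u, v)) * Real.sqrt (ρ (u, v))) = g u * ∫ v, ρ (u, v) := by
      by_cases hZ0 : (∫ v, ρ (u, v)) = 0
      · have hρ0 : (fun v => ρ (u, v)) =ᵐ[volume] 0 :=
          (integral_eq_zero_iff_of_nonneg (fun v => hρpos _) hu).mp hZ0
        have : (fun v => Real.sqrt (π (u, v)) * Real.sqrt (ρ (u, v))) =ᵐ[volume] 0 := by
          filter_upwards [hρ0] with v hv
          simp only [Pi.zero_apply] at hv ⊢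
          rw [hv]; simp
        rw [integral_congr_ae this]
        simp [hZ0]
      · rw [hgu u, div_mul_cancel₀ _ hZ0]
    rw [hhZ]; ring
  -- nonzero squares
  have hszs : Real.sqrt zs ≠ 0 := by positivity
  have hszt : Real.sqrt zt ≠ 0 := by positivity
  have hzs2 : Real.sqrt zs ^ 2 = zs := Real.sq_sqrt hzs0.le
  have hzt2 : Real.sqrt zt ^ 2 = zt := Real.sq_sqrt hzt0.le
  -- sqrt-div rewrites for the goal
  have hrw_s : ∀ p : (Fin n → ℝ) × (Fin m → ℝ),
      Real.sqrt (g p.1 ^ 2 * ρ p / zs) = Real.sqrt (g p.1 ^ 2 * ρ p) / Real.sqrt zs :=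
    fun p => Real.sqrt_div (mul_nonneg (sq_nonneg _) (hρpos p)) _
  have hrw_t : ∀ p : (Fin n → ℝ) × (Fin m → ℝ),
      Real.sqrt (gt p.1 ^ 2 * ρ p / zt) = Real.sqrt (gt p.1 ^ 2 * ρ p) / Real.sqrt zt :=
    fun p => Real.sqrt_div (mul_nonneg (sq_nonneg _) (hρpos p)) _
  -- expansions
  have E_t : ∫ p, (Real.sqrt (π p) - Real.sqrt (gt p.1 ^ 2 * ρ p) / Real.sqrt zt) ^ 2
      = 2 - 2 / Real.sqrt zt * ∫ p, Real.sqrt (π p) * Real.sqrt (gt p.1 ^ 2 * ρ p) := by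
    have hpt : ∀ p : (Fin n → ℝ) × (Fin m → ℝ),
        (Real.sqrt (π p) - Real.sqrt (gt p.1 ^ 2 * ρ p) / Real.sqrt zt) ^ 2
        = (π p + gt p.1 ^ 2 * ρ p / zt)
          - 2 / Real.sqrt zt * (Real.sqrt (π p) * Real.sqrt (gt p.1 ^ 2 * ρ p)) := by
      intro p
      rw [expand_sq1 hszt, Real.sq_sqrt (hπpos p), Real.sq_sqrt (mul_nonneg (sq_nonneg _) (hρpos p)), hzt2]
    calc ∫ p, (Real.sqrt (π p) - Real.sqrt (gt p.1 ^ 2 * ρ p) / Real.sqrt zt) ^ 2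
        = ∫ p, ((π p + gt p.1 ^ 2 * ρ p / zt)
          - 2 / Real.sqrt zt * (Real.sqrt (π p) * Real.sqrt (gt p.1 ^ 2 * ρ p))) := by
          congr 1; funext p; exact hpt p
      _ = ((∫ p, π p) + (∫ p, gt p.1 ^ 2 * ρ p) / zt)
          - 2 / Real.sqrt zt * ∫ p, Real.sqrt (π p) * Real.sqrt (gt p.1 ^ 2 * ρ p) := by
          have h1 : Integrable (fun p => π p + gt p.1 ^ 2 * ρ p / zt) volume :=
            hπInt.add (hgtInt.div_const zt)
          rw [integral_sub h1 (hFT.const_mul _),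
            integral_add hπInt (hgtInt.div_const zt), integral_div, integral_const_mul]
      _ = 2 - 2 / Real.sqrt zt * ∫ p, Real.sqrt (π p) * Real.sqrt (gt p.1 ^ 2 * ρ p) := by
          rw [hπint, ← hzt, div_self hzt0.ne']; ring
  have E_s : ∫ p, (Real.sqrt (π p) - Real.sqrt (g p.1 ^ 2 * ρ p) / Real.sqrt zs) ^ 2
      = 2 - 2 * Real.sqrt zs := by
    have hpt : ∀ p : (Fin n → ℝ) × (Fin m → ℝ),
        (Real.sqrt (π p) - Real.sqrt (g p.1 ^ 2 * ρ p) / Real.sqrt zs) ^ 2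
        = (π p + g p.1 ^ 2 * ρ p / zs)
          - 2 / Real.sqrt zs * (Real.sqrt (π p) * Real.sqrt (g p.1 ^ 2 * ρ p)) := by
      intro p
      rw [expand_sq1 hszs, Real.sq_sqrt (hπpos p), Real.sq_sqrt (mul_nonneg (sq_nonneg _) (hρpos p)), hzs2]
    calc ∫ p, (Real.sqrt (π p) - Real.sqrt (g p.1 ^ 2 * ρ p) / Real.sqrt zs) ^ 2
        = ∫ p, ((π p + g p.1 ^ 2 * ρ p / zs)
          - 2 / Real.sqrt zs * (Real.sqrt (π p) * Real.sqrt (g p.1 ^ 2 * ρ p))) := by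
          congr 1; funext p; exact hpt p
      _ = ((∫ p, π p) + (∫ p, g p.1 ^ 2 * ρ p) / zs)
          - 2 / Real.sqrt zs * ∫ p, Real.sqrt (π p) * Real.sqrt (g p.1 ^ 2 * ρ p) := by
          have h1 : Integrable (fun p => π p + g p.1 ^ 2 * ρ p / zs) volume :=
            hπInt.add (hGInt.div_const zs)
          rw [integral_sub h1 (hFS.const_mul _),
            integral_add hπInt (hGInt.div_const zs), integral_div, integral_const_mul]
      _ = 2 - 2 * Real.sqrt zs := by
          rw [hπint, ← hzs, div_self hzs0.ne', key1]
          field_simp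
          linear_combination 2 * hzs2
  have E_st : ∫ p, (Real.sqrt (g p.1 ^ 2 * ρ p) / Real.sqrt zs
        - Real.sqrt (gt p.1 ^ 2 * ρ p) / Real.sqrt zt) ^ 2
      = 2 - 2 / (Real.sqrt zs * Real.sqrt zt)
          * ∫ p, Real.sqrt (π p) * Real.sqrt (gt p.1 ^ 2 * ρ p) := by
    have hpt : ∀ p : (Fin n → ℝ) × (Fin m → ℝ),
        (Real.sqrt (g p.1 ^ 2 * ρ p) / Real.sqrt zs
          - Real.sqrt (gt p.1 ^ 2 * ρ p) / Real.sqrt zt) ^ 2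
        = (g p.1 ^ 2 * ρ p / zs + gt p.1 ^ 2 * ρ p / zt)
          - 2 / (Real.sqrt zs * Real.sqrt zt)
            * (Real.sqrt (g p.1 ^ 2 * ρ p) * Real.sqrt (gt p.1 ^ 2 * ρ p)) := by
      intro p
      rw [expand_sq2 hszs hszt, Real.sq_sqrt (mul_nonneg (sq_nonneg _) (hρpos p)),
        Real.sq_sqrt (mul_nonneg (sq_nonneg _) (hρpos p)), hzs2, hzt2]
    calc ∫ p, (Real.sqrt (g p.1 ^ 2 * ρ p) / Real.sqrt zs
          - Real.sqrt (gt p.1 ^ 2 * ρ p) / Real.sqrt zt) ^ 2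
        = ∫ p, ((g p.1 ^ 2 * ρ p / zs + gt p.1 ^ 2 * ρ p / zt)
          - 2 / (Real.sqrt zs * Real.sqrt zt)
            * (Real.sqrt (g p.1 ^ 2 * ρ p) * Real.sqrt (gt p.1 ^ 2 * ρ p))) := by
          congr 1; funext p; exact hpt p
      _ = ((∫ p, g p.1 ^ 2 * ρ p) / zs + (∫ p, gt p.1 ^ 2 * ρ p) / zt)
          - 2 / (Real.sqrt zs * Real.sqrt zt)
            * ∫ p, Real.sqrt (g p.1 ^ 2 * ρ p) * Real.sqrt (gt p.1 ^ 2 * ρ p) := by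
          have h1 : Integrable (fun p => g p.1 ^ 2 * ρ p / zs + gt p.1 ^ 2 * ρ p / zt) volume :=
            (hGInt.div_const zs).add (hgtInt.div_const zt)
          rw [integral_sub h1 (hST.const_mul _),
            integral_add (hGInt.div_const zs) (hgtInt.div_const zt), integral_div, integral_div,
            integral_const_mul]
      _ = 2 - 2 / (Real.sqrt zs * Real.sqrt zt)
            * ∫ p, Real.sqrt (π p) * Real.sqrt (gt p.1 ^ 2 * ρ p) := by
          rw [← hzs, ← hzt, div_self hzs0.ne', div_self hzt0.ne', ← key2]; ring
  constructor
  · simp only [hrw_s, hrw_t]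
    rw [E_t, E_s, E_st]
    field_simp
    ring
  · apply Real.sqrt_le_sqrt
    simp only [hrw_s, hrw_t]
    rw [E_t, E_s]
    have hnn : 0 ≤ ∫ p, (Real.sqrt (g p.1 ^ 2 * ρ p) / Real.sqrt zs
        - Real.sqrt (gt p.1 ^ 2 * ρ p) / Real.sqrt zt) ^ 2 :=
      integral_nonneg fun p => sq_nonneg _
    rw [E_st] at hnn
    set NB := ∫ p, Real.sqrt (π p) * Real.sqrt (gt p.1 ^ 2 * ρ p) with hNB
    have hst : (0:ℝ) < Real.sqrt zs * Real.sqrt zt := by positivity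
    have h2 : 2 / (Real.sqrt zs * Real.sqrt zt) * NB ≤ 2 := by linarith
    have h3 : NB ≤ Real.sqrt zs * Real.sqrt zt := by
      rw [div_mul_eq_mul_div, div_le_iff₀ hst] at h2; linarith
    have h4 : 2 / Real.sqrt zt * NB ≤ 2 * Real.sqrt zs := by
      rw [div_mul_eq_mul_div, div_le_iff₀ (Real.sqrt_pos.mpr hzt0)]
      calc 2 * NB ≤ 2 * (Real.sqrt zs * Real.sqrt zt) := by linarith
        _ = 2 * Real.sqrt zs * Real.sqrt zt := by ring
    linarith
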